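/- For every integer m ≥ 3, the set of real numbers x ∈ [0,1] whose continued logarithm representation to base m does not contain every digit i ∈ {1,...,m-1} infinitely often has Lebesgue measure zero. -/

import Mathlib

open MeasureTheory

/-- The expanding map `f x = m ^ x mod 1`. -/
noncomputable def f (m : ℕ) (x : ℝ) : ℝ := Int.fract ((m : ℝ) ^ x)

noncomputable def T (m d : ℕ) (x : ℝ) : ℝ := Real.log (d + x) / Real.log m

lemma one_lt_log (m : ℕ) (hm : 3 ≤ m) : 1 < Real.log m := by
  have h3 : (3:ℝ) ≤ m := by exact_mod_cast hm
  have : Real.exp 1 < 3 := by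
    have := Real.exp_one_lt_d9
    linarith
  have : Real.exp 1 < m := lt_of_lt_of_le this h3
  calc (1:ℝ) = Real.log (Real.exp 1) := (Real.log_exp 1).symm
    _ < Real.log m := Real.log_lt_log (Real.exp_pos 1) this

lemma log_pos' (m : ℕ) (hm : 3 ≤ m) : 0 < Real.log m := lt_trans one_pos (one_lt_log m hm)

lemma T_mono (m d : ℕ) (hm : 3 ≤ m) (hd1 : 1 ≤ d) {x y : ℝ} (hx : 0 ≤ x) (hxy : x ≤ y) :
    T m d x ≤ T m d y := by
  have hdx : (0:ℝ) < d + x := by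
    have : (1:ℝ) ≤ d := by exact_mod_cast hd1
    linarith
  have : Real.log (d + x) ≤ Real.log (d + y) := Real.log_le_log hdx (by linarith)
  exact div_le_div_of_nonneg_right this (log_pos' m hm).le

lemma T_mem (m d : ℕ) (hm : 3 ≤ m) (hd1 : 1 ≤ d) (hd2 : d ≤ m - 1) {x : ℝ}
    (hx : x ∈ Set.Icc (0:ℝ) 1) : T m d x ∈ Set.Icc (0:ℝ) 1 := by
  obtain ⟨hx0, hx1⟩ := hx
  have hd1' : (1:ℝ) ≤ d := by exact_mod_cast hd1
  have hdm : (d:ℝ) + 1 ≤ m := by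
    have : d + 1 ≤ m := by omega
    exact_mod_cast this
  have h1 : (1:ℝ) ≤ d + x := by linarith
  have h2 : (d:ℝ) + x ≤ m := by linarith
  constructor
  · exact div_nonneg (Real.log_nonneg h1) (log_pos' m hm).le
  · unfold T
    rw [div_le_one (log_pos' m hm)]
    exact Real.log_le_log (by linarith) h2

lemma T_lip_le (m d : ℕ) (hm : 3 ≤ m) (hd1 : 1 ≤ d) {x y : ℝ} (hx : 0 ≤ x) (hxy : x ≤ y) :
    T m d y - T m d x ≤ (y - x) / Real.log m := by
  have hd1' : (1:ℝ) ≤ d := by exact_mod_cast hd1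
  have hdx : (0:ℝ) < d + x := by linarith
  have hdy : (0:ℝ) < d + y := by linarith
  have ht : Real.log ((d + y) / (d + x)) ≤ (d + y) / (d + x) - 1 :=
    Real.log_le_sub_one_of_pos (div_pos hdy hdx)
  rw [Real.log_div hdy.ne' hdx.ne'] at ht
  have h2 : ((d:ℝ) + y) / (d + x) - 1 = (y - x) / (d + x) := by field_simp; ring
  have h3 : (y - x) / ((d:ℝ) + x) ≤ y - x := div_le_self (by linarith) (by linarith)
  have : Real.log (d + y) - Real.log (d + x) ≤ y - x := by rw [h2] at ht; linarith
  unfold T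
  rw [div_sub_div_same]
  exact div_le_div_of_nonneg_right this (log_pos' m hm).le

lemma T_hasDeriv (m d : ℕ) (hd1 : 1 ≤ d) {x : ℝ} (hx : 0 ≤ x) :
    HasDerivAt (T m d) (1 / (((d:ℝ) + x) * Real.log m)) x := by
  have hd1' : (1:ℝ) ≤ d := by exact_mod_cast hd1
  have hdx : ((d:ℝ) + x) ≠ 0 := by positivity
  have h1 : HasDerivAt (fun y : ℝ => (d:ℝ) + y) 1 x := (hasDerivAt_id x).const_add _
  have h2 : HasDerivAt (fun y : ℝ => Real.log ((d:ℝ) + y)) (1 / ((d:ℝ) + x)) x := by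
    have := (Real.hasDerivAt_log hdx).comp x h1
    simpa [Function.comp_def] using this
  have h3 := h2.div_const (Real.log m)
  rw [show 1 / (((d:ℝ) + x) * Real.log m) = 1 / ((d:ℝ) + x) / Real.log m by rw [div_div]]
  exact h3

noncomputable def G (m : ℕ) : List ℕ → ℝ → ℝ
  | [], x => x
  | d :: w, x => T m d (G m w x)

noncomputable def DG (m : ℕ) : List ℕ → ℝ → ℝ
  | [], _ => 1
  | d :: w, x => DG m w x / (((d:ℝ) + G m w x) * Real.log m)

def Ok (m : ℕ) (w : List ℕ) : Prop := ∀ d ∈ w, 1 ≤ d ∧ d ≤ m - 1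

@[simp] lemma G_nil (m : ℕ) (x : ℝ) : G m [] x = x := rfl
@[simp] lemma G_cons (m d : ℕ) (w : List ℕ) (x : ℝ) : G m (d :: w) x = T m d (G m w x) := rfl

lemma G_append (m : ℕ) (w w' : List ℕ) (x : ℝ) : G m (w ++ w') x = G m w (G m w' x) := by
  induction w with
  | nil => rfl
  | cons d w ih => simp [ih]

lemma G_mem (m : ℕ) (hm : 3 ≤ m) : ∀ (w : List ℕ), Ok m w → ∀ {x : ℝ},
    x ∈ Set.Icc (0:ℝ) 1 → G m w x ∈ Set.Icc (0:ℝ) 1 := by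
  intro w
  induction w with
  | nil => intro _ x hx; simpa using hx
  | cons d w ih =>
    intro hok x hx
    have hd := hok d List.mem_cons_self
    have hw : Ok m w := fun e he => hok e (List.mem_cons_of_mem _ he)
    exact T_mem m d hm hd.1 hd.2 (ih hw hx)

lemma G_lip (m : ℕ) (hm : 3 ≤ m) : ∀ (w : List ℕ), Ok m w → ∀ {x y : ℝ},
    x ∈ Set.Icc (0:ℝ) 1 → y ∈ Set.Icc (0:ℝ) 1 →
    |G m w x - G m w y| ≤ (1 / Real.log m) ^ w.length * |x - y| := by
  intro w
  induction w with
  | nil => intro _ x y _ _; simp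
  | cons d w ih =>
    intro hok x y hx hy
    have hd := hok d List.mem_cons_self
    have hw : Ok m w := fun e he => hok e (List.mem_cons_of_mem _ he)
    have hgx := G_mem m hm w hw hx
    have hgy := G_mem m hm w hw hy
    have key : ∀ a b : ℝ, 0 ≤ a → 0 ≤ b → a ≤ b → |T m d a - T m d b| ≤ |a - b| / Real.log m := by
      intro a b ha hb hab
      have := T_lip_le m d hm hd.1 ha hab
      have hmono := T_mono m d hm hd.1 ha hab
      rw [abs_sub_comm, abs_of_nonneg (by linarith : (0:ℝ) ≤ T m d b - T m d a),
          abs_sub_comm, abs_of_nonneg (by linarith : (0:ℝ) ≤ b - a)]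
      exact this
    have hTlip : |T m d (G m w x) - T m d (G m w y)| ≤ |G m w x - G m w y| / Real.log m := by
      rcases le_total (G m w x) (G m w y) with h | h
      · exact key _ _ hgx.1 hgy.1 h
      · rw [abs_sub_comm, abs_sub_comm (G m w x)]
        exact key _ _ hgy.1 hgx.1 h
    calc |G m (d :: w) x - G m (d :: w) y| = |T m d (G m w x) - T m d (G m w y)| := rfl
      _ ≤ |G m w x - G m w y| / Real.log m := hTlip
      _ ≤ ((1 / Real.log m) ^ w.length * |x - y|) / Real.log m := by
          apply div_le_div_of_nonneg_right (ih hw hx hy) (log_pos' m hm).le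
      _ = (1 / Real.log m) ^ (d :: w).length * |x - y| := by
          simp [List.length_cons, pow_succ]; ring

lemma G_deriv (m : ℕ) (hm : 3 ≤ m) : ∀ (w : List ℕ), Ok m w → ∀ {x : ℝ},
    x ∈ Set.Icc (0:ℝ) 1 → HasDerivAt (G m w) (DG m w x) x := by
  intro w
  induction w with
  | nil => intro _ x _; rw [show G m [] = id from funext fun _ => rfl]; simpa [DG] using (hasDerivAt_id x)
  | cons d w ih =>
    intro hok x hx
    have hd := hok d List.mem_cons_self
    have hw : Ok m w := fun e he => hok e (List.mem_cons_of_mem _ he)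
    have hg := G_mem m hm w hw hx
    have h1 := (T_hasDeriv m d hd.1 hg.1).comp x (ih hw hx)
    have h2 : HasDerivAt (G m (d :: w)) (1 / (((d:ℝ) + G m w x) * Real.log m) * DG m w x) x := h1
    have heq : DG m (d :: w) x = 1 / (((d:ℝ) + G m w x) * Real.log m) * DG m w x := by
      show DG m w x / (((d:ℝ) + G m w x) * Real.log m) = _
      ring
    rw [heq]; exact h2

lemma DG_pos (m : ℕ) (hm : 3 ≤ m) : ∀ (w : List ℕ), Ok m w → ∀ {x : ℝ},
    x ∈ Set.Icc (0:ℝ) 1 → 0 < DG m w x := by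
  intro w
  induction w with
  | nil => intro _ x _; norm_num [DG]
  | cons d w ih =>
    intro hok x hx
    have hd := hok d List.mem_cons_self
    have hw : Ok m w := fun e he => hok e (List.mem_cons_of_mem _ he)
    have hg := G_mem m hm w hw hx
    have hd1' : (1:ℝ) ≤ d := by exact_mod_cast hd.1
    show 0 < DG m w x / (((d:ℝ) + G m w x) * Real.log m)
    apply div_pos (ih hw hx)
    apply mul_pos (by linarith [hg.1]) (log_pos' m hm)

lemma DG_ratio (m : ℕ) (hm : 3 ≤ m) : ∀ (w : List ℕ), Ok m w → ∀ {x y : ℝ},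
    x ∈ Set.Icc (0:ℝ) 1 → y ∈ Set.Icc (0:ℝ) 1 →
    DG m w x ≤ Real.exp (∑ j ∈ Finset.range w.length, (1 / Real.log m) ^ j) * DG m w y := by
  intro w
  induction w with
  | nil => intro _ x y _ _; simp [DG, Real.exp_nonneg]
  | cons d w ih =>
    intro hok x y hx hy
    have hd := hok d List.mem_cons_self
    have hw : Ok m w := fun e he => hok e (List.mem_cons_of_mem _ he)
    have hgx := G_mem m hm w hw hx
    have hgy := G_mem m hm w hw hy
    have hd1' : (1:ℝ) ≤ d := by exact_mod_cast hd.1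
    have hpx : (0:ℝ) < (d:ℝ) + G m w x := by linarith [hgx.1]
    have hpy : (0:ℝ) < (d:ℝ) + G m w y := by linarith [hgy.1]
    have hlm := log_pos' m hm
    set θ := 1 / Real.log m with hθ
    have hθpos : 0 < θ := by rw [hθ]; exact one_div_pos.mpr hlm
    have hlip : |G m w x - G m w y| ≤ θ ^ w.length := by
      have := G_lip m hm w hw hx hy
      have hxy1 : |x - y| ≤ 1 := by
        rw [abs_le]; constructor <;> [linarith [hx.1, hx.2, hy.1, hy.2]; linarith [hx.1, hx.2, hy.1, hy.2]]
      calc |G m w x - G m w y| ≤ θ ^ w.length * |x - y| := this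
        _ ≤ θ ^ w.length * 1 := by
            apply mul_le_mul_of_nonneg_left hxy1 (by positivity)
        _ = θ ^ w.length := mul_one _
    -- (d + G w y) ≤ exp (θ^n) * (d + G w x)
    have hfac : (d:ℝ) + G m w y ≤ Real.exp (θ ^ w.length) * ((d:ℝ) + G m w x) := by
      have h1 : (d:ℝ) + G m w y ≤ ((d:ℝ) + G m w x) + θ ^ w.length := by
        have := abs_le.mp hlip
        linarith [this.2, abs_le.mp hlip |>.1]
      have h2 : ((d:ℝ) + G m w x) + θ ^ w.length ≤ ((d:ℝ) + G m w x) * (1 + θ ^ w.length) := by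
        have hge1 : (1:ℝ) ≤ (d:ℝ) + G m w x := by linarith [hgx.1]
        nlinarith [pow_nonneg hθpos.le w.length]
      have h3 : (1:ℝ) + θ ^ w.length ≤ Real.exp (θ ^ w.length) := by
        have := Real.add_one_le_exp (θ ^ w.length); linarith
      calc (d:ℝ) + G m w y ≤ ((d:ℝ) + G m w x) * (1 + θ ^ w.length) := le_trans h1 h2
        _ ≤ ((d:ℝ) + G m w x) * Real.exp (θ ^ w.length) := by
            apply mul_le_mul_of_nonneg_left h3 hpx.le
        _ = Real.exp (θ ^ w.length) * ((d:ℝ) + G m w x) := mul_comm _ _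
    have hihr := ih hw hx hy
    have hDy := DG_pos m hm w hw hy
    have hDx := DG_pos m hm w hw hx
    set E1 := Real.exp (∑ j ∈ Finset.range w.length, θ ^ j) with hE1
    set E2 := Real.exp (θ ^ w.length) with hE2
    have expand : Real.exp (∑ j ∈ Finset.range (d :: w).length, θ ^ j) = E1 * E2 := by
      rw [hE1, hE2, ← Real.exp_add, ← Finset.sum_range_succ]
      rfl
    show DG m w x / (((d:ℝ) + G m w x) * Real.log m) ≤
      Real.exp (∑ j ∈ Finset.range (d :: w).length, θ ^ j) *
        (DG m w y / (((d:ℝ) + G m w y) * Real.log m))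
    rw [expand]
    have key : DG m w x * ((d:ℝ) + G m w y) ≤
        E1 * DG m w y * (E2 * ((d:ℝ) + G m w x)) := by
      apply mul_le_mul hihr hfac hpy.le
      exact mul_nonneg (Real.exp_nonneg _) hDy.le
    have goal2 : DG m w x * (((d:ℝ) + G m w y) * Real.log m) ≤
        (E1 * E2 * DG m w y) * (((d:ℝ) + G m w x) * Real.log m) := by
      have h := mul_le_mul_of_nonneg_right key hlm.le
      calc DG m w x * (((d:ℝ) + G m w y) * Real.log m)
          = DG m w x * ((d:ℝ) + G m w y) * Real.log m := by ring
        _ ≤ E1 * DG m w y * (E2 * ((d:ℝ) + G m w x)) * Real.log m := h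
        _ = (E1 * E2 * DG m w y) * (((d:ℝ) + G m w x) * Real.log m) := by ring
    have hrhs : E1 * E2 * (DG m w y / (((d:ℝ) + G m w y) * Real.log m))
        = (E1 * E2 * DG m w y) / (((d:ℝ) + G m w y) * Real.log m) := by ring
    rw [hrhs, div_le_div_iff₀ (mul_pos hpx hlm) (mul_pos hpy hlm)]
    exact goal2

noncomputable def L (m : ℕ) (w : List ℕ) : ℝ := G m w 1 - G m w 0

noncomputable def Cst (m : ℕ) : ℝ := Real.log m / (Real.log m - 1)

lemma sum_theta_le (m : ℕ) (hm : 3 ≤ m) (n : ℕ) :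
    ∑ j ∈ Finset.range n, (1 / Real.log m) ^ j ≤ Cst m := by
  have h1 := one_lt_log m hm
  set θ := 1 / Real.log m with hθ
  have hθ0 : 0 < θ := by rw [hθ]; positivity
  have hθ1 : θ < 1 := by rw [hθ]; rw [div_lt_one (by linarith)]; linarith
  have hsum : ∑ j ∈ Finset.range n, θ ^ j ≤ 1 / (1 - θ) := by
    rw [geom_sum_eq (by linarith : θ ≠ 1)]
    have hrw : (θ ^ n - 1) / (θ - 1) = (1 - θ ^ n) / (1 - θ) := by
      rw [← neg_div_neg_eq]; ring_nf
    rw [hrw, div_le_div_iff₀ (by linarith) (by linarith)]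
    have hp : 0 ≤ θ ^ n := by positivity
    nlinarith
  calc ∑ j ∈ Finset.range n, θ ^ j ≤ 1 / (1 - θ) := hsum
    _ = Cst m := by
        rw [hθ, Cst]
        field_simp

lemma slope_eq (m : ℕ) (hm : 3 ≤ m) (w : List ℕ) (hok : Ok m w) {a b : ℝ}
    (hab : a < b) (ha : a ∈ Set.Icc (0:ℝ) 1) (hb : b ∈ Set.Icc (0:ℝ) 1) :
    ∃ ξ ∈ Set.Icc (0:ℝ) 1, G m w b - G m w a = (b - a) * DG m w ξ := by
  have hsub : Set.Icc a b ⊆ Set.Icc (0:ℝ) 1 := Set.Icc_subset_Icc ha.1 hb.2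
  have hcont : ContinuousOn (G m w) (Set.Icc a b) := fun x hx =>
    ((G_deriv m hm w hok (hsub hx)).continuousAt).continuousWithinAt
  have hderiv : ∀ x ∈ Set.Ioo a b, HasDerivAt (G m w) (DG m w x) x := fun x hx =>
    G_deriv m hm w hok (hsub (Set.mem_Icc_of_Ioo hx))
  obtain ⟨ξ, hξ, heq⟩ := exists_hasDerivAt_eq_slope (G m w) (DG m w) hab hcont hderiv
  refine ⟨ξ, hsub (Set.mem_Icc_of_Ioo hξ), ?_⟩
  have hba : b - a ≠ 0 := by linarith
  rw [heq]
  field_simp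

lemma L_pos (m : ℕ) (hm : 3 ≤ m) (w : List ℕ) (hok : Ok m w) : 0 < L m w := by
  obtain ⟨ξ, hξ, heq⟩ := slope_eq m hm w hok one_pos (by norm_num) (by norm_num)
  have := DG_pos m hm w hok hξ
  rw [L, heq]
  linarith

lemma distortion_lower (m : ℕ) (hm : 3 ≤ m) (w : List ℕ) (hok : Ok m w) {a b : ℝ}
    (hab : a ≤ b) (ha : a ∈ Set.Icc (0:ℝ) 1) (hb : b ∈ Set.Icc (0:ℝ) 1) :
    (b - a) * Real.exp (-(Cst m)) * L m w ≤ G m w b - G m w a := by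
  rcases eq_or_lt_of_le hab with rfl | hab'
  · simp
  obtain ⟨ξ₁, hξ₁, heq₁⟩ := slope_eq m hm w hok hab' ha hb
  obtain ⟨ξ₂, hξ₂, heq₂⟩ := slope_eq m hm w hok one_pos (by norm_num) (by norm_num)
  have hL : L m w = DG m w ξ₂ := by rw [L, heq₂]; ring
  have hratio := DG_ratio m hm w hok hξ₂ hξ₁
  have hC := sum_theta_le m hm w.length
  have h1pos := DG_pos m hm w hok hξ₁
  have hexp : Real.exp (∑ j ∈ Finset.range w.length, (1 / Real.log m) ^ j) ≤ Real.exp (Cst m) :=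
    Real.exp_le_exp.mpr hC
  have hkey : DG m w ξ₂ ≤ Real.exp (Cst m) * DG m w ξ₁ := by
    calc DG m w ξ₂ ≤ Real.exp (∑ j ∈ Finset.range w.length, (1 / Real.log m) ^ j) * DG m w ξ₁ := hratio
      _ ≤ Real.exp (Cst m) * DG m w ξ₁ := mul_le_mul_of_nonneg_right hexp h1pos.le
  have hkey2 : Real.exp (-(Cst m)) * DG m w ξ₂ ≤ DG m w ξ₁ := by
    rw [Real.exp_neg]
    rw [inv_mul_le_iff₀ (Real.exp_pos _)]
    linarith [hkey]
  rw [heq₁, hL]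
  calc (b - a) * Real.exp (-(Cst m)) * DG m w ξ₂
      = (b - a) * (Real.exp (-(Cst m)) * DG m w ξ₂) := by ring
    _ ≤ (b - a) * DG m w ξ₁ := by
        apply mul_le_mul_of_nonneg_left hkey2 (by linarith)

lemma telescope (m : ℕ) (hm : 3 ≤ m) (w : List ℕ) :
    ∑ d ∈ Finset.Icc 1 (m - 1), L m (w ++ [d]) = L m w := by
  have hlm := log_pos' m hm
  have hL : ∀ d : ℕ, L m (w ++ [d]) = G m w (Real.log (d + 1) / Real.log m)
      - G m w (Real.log d / Real.log m) := by
    intro d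
    rw [L, G_append, G_append]
    simp [T]
  set F : ℕ → ℝ := fun j => G m w (Real.log j / Real.log m) with hF
  have hstep : ∀ d : ℕ, L m (w ++ [d]) = F (d + 1) - F d := by
    intro d
    rw [hL d, hF]
    push_cast
    ring_nf
  calc ∑ d ∈ Finset.Icc 1 (m - 1), L m (w ++ [d])
      = ∑ d ∈ Finset.Icc 1 (m - 1), (F (d + 1) - F d) := by
        exact Finset.sum_congr rfl fun d _ => hstep d
    _ = ∑ i ∈ Finset.range (m - 1), (F (1 + i + 1) - F (1 + i)) := by
        have hIcc : Finset.Icc 1 (m - 1) = Finset.Ico 1 m := by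
          rw [← Finset.Ico_add_one_right_eq_Icc]; congr 1; omega
        rw [hIcc, Finset.sum_Ico_eq_sum_range]
    _ = ∑ i ∈ Finset.range (m - 1), ((fun j => F (1 + j)) (i + 1) - (fun j => F (1 + j)) i) := by
        apply Finset.sum_congr rfl
        intro i _
        simp only []
        congr 2
    _ = F (1 + (m - 1)) - F (1 + 0) := Finset.sum_range_sub (fun j => F (1 + j)) (m - 1)
    _ = F m - F 1 := by congr 2 <;> omega
    _ = L m w := by
        rw [hF, L]
        have h1 : Real.log (1:ℕ) / Real.log m = 0 := by simp
        have hm' : Real.log (m:ℕ) / Real.log m = 1 := div_self hlm.ne'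
        simp only []
        rw [h1, hm']

def ext (A : Finset ℕ) (S : Finset (List ℕ)) : ℕ → Finset (List ℕ)
  | 0 => S
  | n + 1 => (ext A S n).biUnion (fun w => A.image (fun d => w ++ [d]))

lemma ext_invariant (m : ℕ) (A : Finset ℕ) (S : Finset (List ℕ)) (N : ℕ)
    (hS : ∀ w ∈ S, w.length = N ∧ Ok m w) (hA : A ⊆ Finset.Icc 1 (m - 1)) :
    ∀ n, ∀ w ∈ ext A S n, w.length = N + n ∧ Ok m w := by
  intro n
  induction n with
  | zero => intro w hw; simpa using hS w hw
  | succ n ih =>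
    intro w hw
    rw [ext, Finset.mem_biUnion] at hw
    obtain ⟨u, hu, hw⟩ := hw
    rw [Finset.mem_image] at hw
    obtain ⟨d, hd, rfl⟩ := hw
    obtain ⟨hlen, hok⟩ := ih u hu
    have hd' := Finset.mem_Icc.mp (hA hd)
    constructor
    · simp [hlen]; omega
    · intro e he
      rcases List.mem_append.mp he with h | h
      · exact hok e h
      · simp at h; subst h; exact hd'

lemma mem_ext_of (A : Finset ℕ) (S : Finset (List ℕ)) :
    ∀ n (w : List ℕ), w ∈ S → ∀ v : List ℕ, v.length = n → (∀ d ∈ v, d ∈ A) →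
    w ++ v ∈ ext A S n := by
  intro n
  induction n with
  | zero =>
    intro w hw v hv _
    rw [List.length_eq_zero_iff] at hv
    subst hv
    simpa [ext] using hw
  | succ n ih =>
    intro w hw v hv hvA
    rcases List.eq_nil_or_concat v with rfl | ⟨v', d, rfl⟩
    · simp at hv
    · have hv' : v'.length = n := by simp at hv; omega
      have hv'A : ∀ e ∈ v', e ∈ A := fun e he => hvA e (by simp [he])
      have hdA : d ∈ A := hvA d (by simp)
      rw [ext, Finset.mem_biUnion]
      refine ⟨w ++ v', ih w hw v' hv' hv'A, ?_⟩
      rw [Finset.mem_image]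
      exact ⟨d, hdA, by simp⟩

lemma sum_ext_le (m : ℕ) (hm : 3 ≤ m) (A : Finset ℕ) (S : Finset (List ℕ)) (N : ℕ)
    (hS : ∀ w ∈ S, w.length = N ∧ Ok m w) (hA : A ⊆ Finset.Icc 1 (m - 1))
    (r : ℝ) (hr : 0 ≤ r)
    (hstep : ∀ w : List ℕ, Ok m w → ∑ d ∈ A, L m (w ++ [d]) ≤ r * L m w) :
    ∀ n, ∑ w ∈ ext A S n, L m w ≤ r ^ n * ∑ w ∈ S, L m w := by
  intro n
  induction n with
  | zero => simp [ext]
  | succ n ih =>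
    have hdisj : (↑(ext A S n) : Set (List ℕ)).PairwiseDisjoint
        (fun w => A.image (fun d => w ++ [d])) := by
      intro w hw w' hw' hne
      simp only [Finset.disjoint_left, Finset.mem_image]
      rintro v ⟨d, _, rfl⟩ ⟨d', _, heq⟩
      have hlen : w'.length = w.length := by
        have h1 := (ext_invariant m A S N hS hA n w hw).1
        have h2 := (ext_invariant m A S N hS hA n w' hw').1
        omega
      exact hne (List.append_inj heq.symm hlen.symm).1
    rw [ext, Finset.sum_biUnion hdisj]
    have hinner : ∀ w ∈ ext A S n, ∑ v ∈ A.image (fun d => w ++ [d]), L m v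
        = ∑ d ∈ A, L m (w ++ [d]) := by
      intro w _
      apply Finset.sum_image
      intro d _ d' _ h
      simpa using List.append_cancel_left h
    calc ∑ w ∈ ext A S n, ∑ v ∈ A.image (fun d => w ++ [d]), L m v
        = ∑ w ∈ ext A S n, ∑ d ∈ A, L m (w ++ [d]) :=
          Finset.sum_congr rfl hinner
      _ ≤ ∑ w ∈ ext A S n, r * L m w := by
          apply Finset.sum_le_sum
          intro w hw
          exact hstep w (ext_invariant m A S N hS hA n w hw).2
      _ = r * ∑ w ∈ ext A S n, L m w := by rw [Finset.mul_sum]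
      _ ≤ r * (r ^ n * ∑ w ∈ S, L m w) := mul_le_mul_of_nonneg_left ih hr
      _ = r ^ (n + 1) * ∑ w ∈ S, L m w := by ring

noncomputable def ci (m i : ℕ) : ℝ := (T m i 1 - T m i 0) * Real.exp (-(Cst m))

lemma Cst_pos (m : ℕ) (hm : 3 ≤ m) : 0 < Cst m := by
  have := one_lt_log m hm
  exact div_pos (by linarith) (by linarith)

lemma ci_pos (m i : ℕ) (hm : 3 ≤ m) (hi1 : 1 ≤ i) : 0 < ci m i := by
  have hlm := log_pos' m hm
  have hi' : (0:ℝ) < i := by exact_mod_cast hi1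
  have : Real.log ((i:ℝ) + 0) < Real.log ((i:ℝ) + 1) := by
    apply Real.log_lt_log (by linarith)
    linarith
  have hT : T m i 0 < T m i 1 := by
    unfold T
    exact div_lt_div_of_pos_right this hlm
  exact mul_pos (by linarith) (Real.exp_pos _)

lemma ci_lt_one (m i : ℕ) (hm : 3 ≤ m) (hi1 : 1 ≤ i) (hi2 : i ≤ m - 1) : ci m i < 1 := by
  have h0 := T_mem m i hm hi1 hi2 (Set.mem_Icc.mpr ⟨le_refl 0, zero_le_one⟩)
  have h1 := T_mem m i hm hi1 hi2 (Set.mem_Icc.mpr ⟨zero_le_one, le_refl 1⟩)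
  have hlen : T m i 1 - T m i 0 ≤ 1 := by linarith [h0.1, h1.2]
  have hexp : Real.exp (-(Cst m)) < 1 := by
    rw [Real.exp_lt_one_iff]
    linarith [Cst_pos m hm]
  have hnn : 0 ≤ T m i 1 - T m i 0 := by
    have := T_mono m i hm hi1 (le_refl (0:ℝ)) zero_le_one
    linarith
  calc ci m i ≤ 1 * Real.exp (-(Cst m)) := by
        unfold ci
        apply mul_le_mul_of_nonneg_right hlen (Real.exp_nonneg _)
    _ < 1 := by rw [one_mul]; exact hexp

lemma step_full (m : ℕ) (hm : 3 ≤ m) (w : List ℕ) (_ : Ok m w) :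
    ∑ d ∈ Finset.Icc 1 (m - 1), L m (w ++ [d]) ≤ 1 * L m w := by
  rw [telescope m hm w, one_mul]

lemma L_concat (m : ℕ) (w : List ℕ) (d : ℕ) :
    L m (w ++ [d]) = G m w (T m d 1) - G m w (T m d 0) := by
  rw [L, G_append, G_append]
  rfl

lemma step_erase (m i : ℕ) (hm : 3 ≤ m) (hi1 : 1 ≤ i) (hi2 : i ≤ m - 1)
    (w : List ℕ) (hok : Ok m w) :
    ∑ d ∈ (Finset.Icc 1 (m - 1)).erase i, L m (w ++ [d]) ≤ (1 - ci m i) * L m w := by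
  have hi : i ∈ Finset.Icc 1 (m - 1) := Finset.mem_Icc.mpr ⟨hi1, hi2⟩
  rw [Finset.sum_erase_eq_sub hi, telescope m hm w]
  have h0 := T_mem m i hm hi1 hi2 (Set.mem_Icc.mpr ⟨le_refl 0, zero_le_one⟩)
  have h1 := T_mem m i hm hi1 hi2 (Set.mem_Icc.mpr ⟨zero_le_one, le_refl 1⟩)
  have hab : T m i 0 ≤ T m i 1 := by
    have := T_mono m i hm hi1 (le_refl (0:ℝ)) zero_le_one
    linarith
  have hdist := distortion_lower m hm w hok hab h0 h1
  rw [← L_concat m w i] at hdist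
  have : ci m i * L m w ≤ L m (w ++ [i]) := by
    unfold ci
    calc (T m i 1 - T m i 0) * Real.exp (-(Cst m)) * L m w
        = (T m i 1 - T m i 0) * Real.exp (-(Cst m)) * L m w := rfl
      _ ≤ L m (w ++ [i]) := hdist
  linarith

lemma f_mem_Ico (m : ℕ) (x : ℝ) : f m x ∈ Set.Ico (0:ℝ) 1 :=
  ⟨Int.fract_nonneg _, Int.fract_lt_one _⟩

lemma exists_digit (m : ℕ) (hm : 3 ≤ m) {y : ℝ} (hy : y ∈ Set.Ico (0:ℝ) 1) :
    ∃ d : ℕ, 1 ≤ d ∧ d ≤ m - 1 ∧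
      y ∈ Set.Ico (Real.log d / Real.log m) (Real.log (d + 1) / Real.log m) ∧
      T m d (f m y) = y := by
  obtain ⟨hy0, hy1⟩ := hy
  have hm1 : (1:ℝ) < m := by
    have : (3:ℝ) ≤ m := by exact_mod_cast hm
    linarith
  have hm0 : (0:ℝ) < m := by linarith
  have hlm := log_pos' m hm
  set z := (m:ℝ) ^ y with hz
  have hz1 : (1:ℝ) ≤ z := by
    have h := Real.rpow_le_rpow_of_exponent_le hm1.le hy0
    rwa [Real.rpow_zero] at h
  have hzm : z < m := by
    have h := Real.rpow_lt_rpow_of_exponent_lt hm1 hy1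
    rwa [Real.rpow_one] at h
  set d := ⌊z⌋₊ with hd
  have hz0 : (0:ℝ) ≤ z := by linarith
  have hd1 : 1 ≤ d := Nat.le_floor (by exact_mod_cast hz1)
  have hdm : d < m := (Nat.floor_lt hz0).mpr (by exact_mod_cast hzm)
  have hfl : (d:ℝ) ≤ z := Nat.floor_le hz0
  have hfu : z < d + 1 := Nat.lt_floor_add_one z
  have hd0 : (0:ℝ) < d := by exact_mod_cast hd1
  have hlogz : Real.log z = y * Real.log m := Real.log_rpow hm0 y
  refine ⟨d, hd1, by omega, ⟨?_, ?_⟩, ?_⟩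
  · rw [div_le_iff₀ hlm]
    calc Real.log d ≤ Real.log z := Real.log_le_log hd0 hfl
      _ = y * Real.log m := hlogz
  · rw [lt_div_iff₀ hlm]
    calc y * Real.log m = Real.log z := hlogz.symm
      _ < Real.log (d + 1) := Real.log_lt_log (by linarith) hfu
  · have hIfl : ⌊z⌋ = (d : ℤ) := by
      rw [Int.floor_eq_iff]
      constructor
      · exact_mod_cast hfl
      · push_cast; exact hfu
    have hfr : f m y = z - d := by
      rw [f, ← hz, Int.fract, hIfl]
      push_cast
      ring
    rw [hfr]
    unfold T
    rw [show (d:ℝ) + (z - d) = z by ring, hlogz]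
    field_simp

lemma cover (m : ℕ) (hm : 3 ≤ m) : ∀ n : ℕ, ∀ x : ℝ, x ∈ Set.Ico (0:ℝ) 1 →
    ∃ v : List ℕ, v.length = n ∧ Ok m v ∧ x ∈ Set.Icc (G m v 0) (G m v 1) ∧
      ∀ k, k < n → (f m)^[k] x ∈
        Set.Ico (Real.log (v.getD k 0) / Real.log m) (Real.log (v.getD k 0 + 1) / Real.log m) := by
  intro n
  induction n with
  | zero =>
    intro x hx
    exact ⟨[], rfl, by intro d hd; simp at hd, ⟨hx.1, hx.2.le⟩, by omega⟩
  | succ n ih =>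
    intro x hx
    obtain ⟨d, hd1, hd2, hxI, hTd⟩ := exists_digit m hm hx
    obtain ⟨v', hlen, hok, hmem, hdig⟩ := ih (f m x) (f_mem_Ico m x)
    refine ⟨d :: v', by simp [hlen], ?_, ?_, ?_⟩
    · intro e he
      rcases List.mem_cons.mp he with rfl | h
      · exact ⟨hd1, hd2⟩
      · exact hok e h
    · have hg0 := G_mem m hm v' hok (Set.mem_Icc.mpr ⟨le_refl 0, zero_le_one⟩)
      have hg1 := G_mem m hm v' hok (Set.mem_Icc.mpr ⟨zero_le_one, le_refl 1⟩)
      constructor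
      · show T m d (G m v' 0) ≤ x
        rw [← hTd]
        exact T_mono m d hm hd1 hg0.1 hmem.1
      · show x ≤ T m d (G m v' 1)
        rw [← hTd]
        exact T_mono m d hm hd1 (f_mem_Ico m x).1 hmem.2
    · intro k hk
      cases k with
      | zero => simpa using hxI
      | succ k =>
        have := hdig k (by omega)
        rw [Function.iterate_succ_apply]
        simpa using this

lemma tail_zero (m i : ℕ) (hm : 3 ≤ m) (hi1 : 1 ≤ i) (hi2 : i ≤ m - 1) (N : ℕ) :
    volume {x : ℝ | x ∈ Set.Ico (0:ℝ) 1 ∧ ∀ k, N ≤ k →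
      (f m)^[k] x ∉ Set.Ico (Real.log i / Real.log m) (Real.log (i + 1) / Real.log m)} = 0 := by
  set Afull := Finset.Icc 1 (m - 1) with hAfull
  set SN := ext Afull {[]} N with hSN'
  set allowed := Afull.erase i with hallowed
  have hbase : ∀ w ∈ ({[]} : Finset (List ℕ)), w.length = 0 ∧ Ok m w := by
    intro w hw
    rw [Finset.mem_singleton] at hw
    subst hw
    exact ⟨rfl, by intro d hd; simp at hd⟩
  have hSN : ∀ w ∈ SN, w.length = N ∧ Ok m w := by
    intro w hw
    have := ext_invariant m Afull {[]} 0 hbase (le_refl _) N w hw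
    simpa using this
  have hAsub : allowed ⊆ Afull := Finset.erase_subset _ _
  -- the covering
  have hcov : ∀ n : ℕ, {x : ℝ | x ∈ Set.Ico (0:ℝ) 1 ∧ ∀ k, N ≤ k →
      (f m)^[k] x ∉ Set.Ico (Real.log i / Real.log m) (Real.log (i + 1) / Real.log m)}
      ⊆ ⋃ w ∈ ext allowed SN n, Set.Icc (G m w 0) (G m w 1) := by
    intro n x hx
    obtain ⟨hx1, hx2⟩ := hx
    obtain ⟨v, hlen, hok, hmem, hdig⟩ := cover m hm (N + n) x hx1
    have htakelen : (v.take N).length = N := by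
      rw [List.length_take, hlen]; omega
    have htake : v.take N ∈ SN := by
      have h := mem_ext_of Afull ({[]} : Finset (List ℕ)) N []
        (Finset.mem_singleton_self _) (v.take N) htakelen
        (fun e he => by
          have hev : e ∈ v := List.mem_of_mem_take he
          have := hok e hev
          exact Finset.mem_Icc.mpr this)
      simpa using h
    have hdroplen : (v.drop N).length = n := by
      rw [List.length_drop, hlen]; omega
    have hdropA : ∀ e ∈ v.drop N, e ∈ allowed := by
      intro e he
      obtain ⟨j, hj, hje⟩ := List.mem_iff_getElem.mp he
      have hjn : j < n := by rwa [hdroplen] at hj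
      have hNj : N + j < v.length := by omega
      have hgd : v.getD (N + j) 0 = e := by
        rw [List.getD_eq_getElem _ _ hNj, ← hje]
        rw [List.getElem_drop]
      have hdigNj := hdig (N + j) (by omega)
      rw [hgd] at hdigNj
      have hnotin := hx2 (N + j) (by omega)
      rw [hallowed, Finset.mem_erase]
      constructor
      · -- e ≠ i
        intro hei
        subst hei
        exact hnotin (by exact_mod_cast hdigNj)
      · have hev : e ∈ v := List.mem_of_mem_drop he
        exact Finset.mem_Icc.mpr (hok e hev)
    have hvmem : v ∈ ext allowed SN n := by
      have := mem_ext_of allowed SN n (v.take N) htake (v.drop N) hdroplen hdropA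
      rwa [List.take_append_drop] at this
    exact Set.mem_biUnion hvmem hmem
  -- measure bound
  have hci0 := ci_pos m i hm hi1
  have hci1 := ci_lt_one m i hm hi1 hi2
  have hbound : ∀ n : ℕ, volume {x : ℝ | x ∈ Set.Ico (0:ℝ) 1 ∧ ∀ k, N ≤ k →
      (f m)^[k] x ∉ Set.Ico (Real.log i / Real.log m) (Real.log (i + 1) / Real.log m)}
      ≤ ENNReal.ofReal ((1 - ci m i) ^ n) := by
    intro n
    have hOkext : ∀ w ∈ ext allowed SN n, Ok m w := fun w hw =>
      (ext_invariant m allowed SN N hSN hAsub n w hw).2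
    calc volume {x : ℝ | x ∈ Set.Ico (0:ℝ) 1 ∧ ∀ k, N ≤ k →
        (f m)^[k] x ∉ Set.Ico (Real.log i / Real.log m) (Real.log (i + 1) / Real.log m)}
        ≤ volume (⋃ w ∈ ext allowed SN n, Set.Icc (G m w 0) (G m w 1)) :=
          measure_mono (hcov n)
      _ ≤ ∑ w ∈ ext allowed SN n, volume (Set.Icc (G m w 0) (G m w 1)) :=
          measure_biUnion_finset_le _ _
      _ = ∑ w ∈ ext allowed SN n, ENNReal.ofReal (L m w) := by
          apply Finset.sum_congr rfl
          intro w _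
          rw [Real.volume_Icc, L]
      _ = ENNReal.ofReal (∑ w ∈ ext allowed SN n, L m w) := by
          rw [ENNReal.ofReal_sum_of_nonneg]
          intro w hw
          exact (L_pos m hm w (hOkext w hw)).le
      _ ≤ ENNReal.ofReal ((1 - ci m i) ^ n) := by
          apply ENNReal.ofReal_le_ofReal
          have hmain := sum_ext_le m hm allowed SN N hSN hAsub (1 - ci m i)
            (by linarith) (fun w hok => step_erase m i hm hi1 hi2 w hok) n
          have hSNle : ∑ w ∈ SN, L m w ≤ 1 := by
            have h1 := sum_ext_le m hm Afull ({[]} : Finset (List ℕ)) 0 hbase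
              (le_refl _) 1 zero_le_one (fun w hok => step_full m hm w hok) N
            have : ∑ w ∈ ({[]} : Finset (List ℕ)), L m w = 1 := by
              simp [L]
            rw [this, one_pow, mul_one] at h1
            exact h1
          calc ∑ w ∈ ext allowed SN n, L m w ≤ (1 - ci m i) ^ n * ∑ w ∈ SN, L m w := hmain
            _ ≤ (1 - ci m i) ^ n * 1 := by
                apply mul_le_mul_of_nonneg_left hSNle (pow_nonneg (by linarith) n)
            _ = (1 - ci m i) ^ n := mul_one _
  have htend : Filter.Tendsto (fun n : ℕ => ENNReal.ofReal ((1 - ci m i) ^ n))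
      Filter.atTop (nhds 0) := by
    have h1 : Filter.Tendsto (fun n : ℕ => (1 - ci m i) ^ n) Filter.atTop (nhds 0) :=
      tendsto_pow_atTop_nhds_zero_of_lt_one (by linarith) (by linarith)
    have := (ENNReal.continuous_ofReal.tendsto 0).comp h1
    simpa [Function.comp_def] using this
  have hle := ge_of_tendsto' htend hbound
  exact le_zero_iff.mp hle

theorem stmt10 (m : ℕ) (hm : 3 ≤ m) :
    volume {x ∈ Set.Icc (0 : ℝ) 1 | ¬ ∀ i ∈ Finset.Icc 1 (m - 1),
      {k : ℕ | (f m)^[k] x ∈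
        Set.Ico (Real.log i / Real.log m) (Real.log (i + 1) / Real.log m)}.Infinite}
      = 0 := by
  set TS : ℕ → ℕ → Set ℝ := fun i N => {x : ℝ | x ∈ Set.Ico (0:ℝ) 1 ∧ ∀ k, N ≤ k →
      (f m)^[k] x ∉ Set.Ico (Real.log i / Real.log m) (Real.log (i + 1) / Real.log m)}
    with hTS
  have hsub : {x ∈ Set.Icc (0 : ℝ) 1 | ¬ ∀ i ∈ Finset.Icc 1 (m - 1),
      {k : ℕ | (f m)^[k] x ∈
        Set.Ico (Real.log i / Real.log m) (Real.log (i + 1) / Real.log m)}.Infinite}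
      ⊆ {(1:ℝ)} ∪ ⋃ (i : ℕ) (_ : i ∈ Finset.Icc 1 (m - 1)) (N : ℕ), TS i N := by
    intro x hx
    obtain ⟨hxI, hP⟩ := hx
    push_neg at hP
    obtain ⟨i, hiI, hfin'⟩ := hP
    have hfin := hfin'
    by_cases hx1 : x = 1
    · left; exact hx1
    · right
      have hxIco : x ∈ Set.Ico (0:ℝ) 1 := ⟨hxI.1, lt_of_le_of_ne hxI.2 hx1⟩
      obtain ⟨N, hN⟩ := hfin.bddAbove
      refine Set.mem_iUnion.mpr ⟨i, Set.mem_iUnion.mpr ⟨hiI, Set.mem_iUnion.mpr ⟨N + 1, ?_⟩⟩⟩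
      refine ⟨hxIco, ?_⟩
      intro k hk hmem
      have : k ≤ N := hN hmem
      omega
  have hz : volume ({(1:ℝ)} ∪ ⋃ (i : ℕ) (_ : i ∈ Finset.Icc 1 (m - 1)) (N : ℕ), TS i N) = 0 := by
    apply measure_union_null
    · exact Real.volume_singleton
    · apply measure_iUnion_null
      intro i
      apply measure_iUnion_null
      intro hi
      apply measure_iUnion_null
      intro N
      have hi' := Finset.mem_Icc.mp hi
      exact tail_zero m i hm hi'.1 hi'.2 N
  exact measure_mono_null hsub hz
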